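/- Assume the verifier v : X × Z → [0,1] and faithful translator τ : X → Z satisfy completeness (for all x, if c(x, τ(x)) = 1 then v(x, τ(x)) = 1) and soundness (for all x and all z, if c(x,z) = 0 then v(x,z) = 0). Assume the reward r satisfies r(v₁,1) > r(v₂,0) for all v₁,v₂ and is strictly increasing in its first argument when the second is 1. Then for every x, the value r(v(x, τ(x)), faith(x, τ(x))) is a global maximum over all alternative outputs z of r(v(x,z), faith(x,z)), where faith(x,z) = 1 iff the answer of z equals the solver's answer on x, provided that the solver's answer on x is correct iff c(x,τ(x)) = 1 and τ(x) is faithful. -/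
import Mathlib


/-- under completeness and soundness for `(v, τ)`, reward separation and
strict monotonicity of `r · 1`, and the solver-correctness dichotomy, the faithful
translator's output globally maximizes `z ↦ r (v x z) (faith x z)` for every `x`. -/
theorem faithful_translator_is_best_response
    {X Z : Type*} (c v faith : X → Z → ℝ) (τ : X → Z) (cs : X → ℝ)
    (r : ℝ → ℝ → ℝ)
    (hc : ∀ x z, c x z = 0 ∨ c x z = 1)
    (hfaith_val : ∀ x z, faith x z = 0 ∨ faith x z = 1)
    (hv : ∀ x z, v x z ∈ Set.Icc (0:ℝ) 1)
    (hcs : ∀ x, cs x = 0 ∨ cs x = 1)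
    (hτ_faithful : ∀ x, faith x (τ x) = 1)
    (hcomplete : ∀ x, c x (τ x) = 1 → v x (τ x) = 1)
    (hsound : ∀ x z, c x z = 0 → v x z = 0)
    (hr_sep : ∀ v₁ v₂ : ℝ, v₁ ∈ Set.Icc (0:ℝ) 1 → v₂ ∈ Set.Icc (0:ℝ) 1 →
      r v₁ 1 > r v₂ 0)
    (hr_mono : ∀ v₁ v₂ : ℝ, v₁ ∈ Set.Icc (0:ℝ) 1 → v₂ ∈ Set.Icc (0:ℝ) 1 →
      v₁ > v₂ → r v₁ 1 > r v₂ 1)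
    (hsolver_correct : ∀ x, cs x = 1 → c x (τ x) = 1)
    (hsolver_incorrect : ∀ x, cs x = 0 → ∀ z, faith x z = 1 → c x z = 0) :
    ∀ x, ∀ z : Z, r (v x z) (faith x z) ≤ r (v x (τ x)) (faith x (τ x)) := by
  intro x z
  rw [hτ_faithful x]
  rcases hfaith_val x z with hf | hf
  · rw [hf]
    exact le_of_lt (hr_sep _ _ (hv x (τ x)) (hv x z))
  · rw [hf]
    have hle : v x z ≤ v x (τ x) := by
      rcases hcs x with h0 | h1
      · have := hsound x z (hsolver_incorrect x h0 z hf)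
        rw [this]; exact (hv x (τ x)).1
      · rw [hcomplete x (hsolver_correct x h1)]
        exact (hv x z).2
    rcases lt_or_eq_of_le hle with h | h
    · exact le_of_lt (hr_mono _ _ (hv x (τ x)) (hv x z) h)
    · rw [h]
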